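/- Nondegeneracy criterion: let ρ be a separable invertible density matrix on H1⊗H2 such that Tr_1(ρ) has nondegenerate (all distinct) eigenvalues, with eigenbasis {ϕ_j} of H2. If the correlation function factorizes (Tr(ρE(F⊗1)(1⊗G)) = Σ_iλ_i Tr(ρ_i^I F)Tr(ρ_i^{II}G) for some separable decomposition and all F, G), then ρ_{lkji} = 0 whenever j ≠ i in any product basis {φ_l⊗ϕ_j}, and consequently ρ admits a separable decomposition ρ = Σ_j μ_j σ_j^I ⊗ |ϕ_j⟩⟨ϕ_j| whose second-factor family is abelian. -/

import Mathlib

open Matrix Kronecker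
open scoped ComplexOrder

/-- Partial trace over the first tensor factor. -/
noncomputable def ptrace1 {n m : ℕ} (M : Matrix (Fin n × Fin m) (Fin n × Fin m) ℂ) :
    Matrix (Fin m) (Fin m) ℂ :=
  fun j i => ∑ k : Fin n, M (k, j) (k, i)

/-- Tensor product of vectors. -/
noncomputable def vecTens {n m : ℕ} (x : Fin n → ℂ) (y : Fin m → ℂ) : Fin n × Fin m → ℂ :=
  fun p => x p.1 * y p.2

/-- Rank-one operator `|y⟩⟨z|`. -/
noncomputable def ketbra {d : Type*} (y z : d → ℂ) : Matrix d d ℂ :=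
  fun a b => y a * star (z b)

/-- `γ = ρ^{1/2} (1 ⊗ (Tr₁ρ))^{-1/2}`, given `s = ρ^{1/2}` and `w = (Tr₁ρ)^{-1/2}`. -/
noncomputable def gammaOp {n m : ℕ} (s : Matrix (Fin n × Fin m) (Fin n × Fin m) ℂ)
    (w : Matrix (Fin m) (Fin m) ℂ) : Matrix (Fin n × Fin m) (Fin n × Fin m) ℂ :=
  s * ((1 : Matrix (Fin n) (Fin n) ℂ) ⊗ₖ w)

/-- The generalized conditional expectation `E(A) = 1 ⊗ Tr₁(γ* A γ)`. -/
noncomputable def Emap {n m : ℕ} (s : Matrix (Fin n × Fin m) (Fin n × Fin m) ℂ)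
    (w : Matrix (Fin m) (Fin m) ℂ) (A : Matrix (Fin n × Fin m) (Fin n × Fin m) ℂ) :
    Matrix (Fin n × Fin m) (Fin n × Fin m) ℂ :=
  (1 : Matrix (Fin n) (Fin n) ℂ) ⊗ₖ ptrace1 ((gammaOp s w)ᴴ * A * gammaOp s w)

/-- Matrix element `⟨φ_p⊗ϕ_r | M | φ_q⊗ϕ_s⟩` in a product basis. -/
noncomputable def mel {n m : ℕ} (φ : Fin n → Fin n → ℂ) (ϕ : Fin m → Fin m → ℂ)
    (M : Matrix (Fin n × Fin m) (Fin n × Fin m) ℂ) (p q : Fin n) (r s : Fin m) : ℂ :=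
  star (vecTens (φ p) (ϕ r)) ⬝ᵥ M.mulVec (vecTens (φ q) (ϕ s))

lemma sum_ite_const {α : Type*} [Fintype α] (c : Prop) [Decidable c] (f : α → ℂ) :
    (∑ x : α, if c then f x else 0) = if c then ∑ x, f x else 0 := by
  split <;> simp

lemma kronCT {n m : ℕ} (A : Matrix (Fin n) (Fin n) ℂ) (B : Matrix (Fin m) (Fin m) ℂ) :
    (A ⊗ₖ B)ᴴ = Aᴴ ⊗ₖ Bᴴ := by
  ext ⟨a, b⟩ ⟨c, d⟩
  simp [conjTranspose_apply, kroneckerMap_apply, mul_comm]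

lemma trace_kron_std {n m : ℕ} (M : Matrix (Fin n × Fin m) (Fin n × Fin m) ℂ) (q t : Fin m) :
    (M * ((1 : Matrix (Fin n) (Fin n) ℂ) ⊗ₖ Matrix.single q t (1:ℂ))).trace
      = ptrace1 M t q := by
  simp only [Matrix.trace, Matrix.diag, Matrix.mul_apply, Fintype.sum_prod_type,
    kroneckerMap_apply, Matrix.one_apply, Matrix.single, Matrix.of_apply, ite_and,
    ite_mul, mul_ite, mul_one, mul_zero, zero_mul, one_mul, Finset.sum_ite_eq,
    Finset.sum_ite_eq', Finset.mem_univ, if_true, ptrace1, sum_ite_const]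

lemma ptrace1_mul_kron {n m : ℕ} (M : Matrix (Fin n × Fin m) (Fin n × Fin m) ℂ)
    (T : Matrix (Fin m) (Fin m) ℂ) :
    ptrace1 (M * ((1 : Matrix (Fin n) (Fin n) ℂ) ⊗ₖ T)) = ptrace1 M * T := by
  ext j i
  simp only [ptrace1, Matrix.mul_apply, Fintype.sum_prod_type, kroneckerMap_apply,
    Matrix.one_apply, ite_mul, mul_ite, mul_zero, zero_mul, one_mul,
    Finset.sum_ite_eq, Finset.sum_ite_eq', Finset.mem_univ, if_true, sum_ite_const]
  rw [Finset.sum_comm]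
  simp [Finset.sum_mul]

lemma trace_mul_stdm {m : ℕ} (B : Matrix (Fin m) (Fin m) ℂ) (q t : Fin m) :
    (B * Matrix.single q t (1:ℂ)).trace = B t q := by
  simp [Matrix.trace, Matrix.diag, Matrix.mul_apply, Matrix.single, Matrix.of_apply,
    ite_and, mul_ite, mul_zero, mul_one, Finset.sum_ite_eq, Finset.sum_ite_eq', sum_ite_const]

lemma trace_std_std {n m : ℕ} (M : Matrix (Fin n × Fin m) (Fin n × Fin m) ℂ)
    (p r : Fin n) (q t : Fin m) :
    (M * (Matrix.single p r (1:ℂ) ⊗ₖ Matrix.single q t (1:ℂ))).trace = M (r, t) (p, q) := by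
  simp only [Matrix.trace, Matrix.diag, Matrix.mul_apply, Fintype.sum_prod_type,
    kroneckerMap_apply, Matrix.single, Matrix.of_apply, ite_and,
    ite_mul, mul_ite, mul_one, mul_zero, zero_mul, one_mul, Finset.sum_ite_eq,
    Finset.sum_ite_eq', Finset.mem_univ, if_true, sum_ite_const]

lemma trace_ptrace1 {n m : ℕ} (M : Matrix (Fin n × Fin m) (Fin n × Fin m) ℂ) :
    (ptrace1 M).trace = M.trace := by
  simp only [Matrix.trace, Matrix.diag, ptrace1, Fintype.sum_prod_type]
  rw [Finset.sum_comm]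

lemma trace_mul_one_kron {n m : ℕ} (M : Matrix (Fin n × Fin m) (Fin n × Fin m) ℂ)
    (C : Matrix (Fin m) (Fin m) ℂ) :
    (M * ((1 : Matrix (Fin n) (Fin n) ℂ) ⊗ₖ C)).trace = (ptrace1 M * C).trace := by
  rw [← trace_ptrace1 (M * ((1 : Matrix (Fin n) (Fin n) ℂ) ⊗ₖ C)), ptrace1_mul_kron]

lemma trace_conj_mul {d : Type*} [Fintype d] [DecidableEq d] (U M X : Matrix d d ℂ) :
    (Uᴴ * M * U * X).trace = (M * (U * X * Uᴴ)).trace := by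
  calc (Uᴴ * M * U * X).trace = (Uᴴ * (M * (U * X))).trace := by simp only [Matrix.mul_assoc]
    _ = ((M * (U * X)) * Uᴴ).trace := Matrix.trace_mul_comm _ _
    _ = (M * (U * X * Uᴴ)).trace := by simp only [Matrix.mul_assoc]

lemma conjMulU {d : Type*} [Fintype d] [DecidableEq d] (U A B : Matrix d d ℂ)
    (hU : U * Uᴴ = 1) : (Uᴴ * A * U) * (Uᴴ * B * U) = Uᴴ * (A * B) * U := by
  have h1 : U * (Uᴴ * (B * U)) = B * U := by rw [← Matrix.mul_assoc, hU, one_mul]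
  calc (Uᴴ * A * U) * (Uᴴ * B * U) = Uᴴ * (A * (U * (Uᴴ * (B * U)))) := by
        simp only [Matrix.mul_assoc]
    _ = Uᴴ * (A * (B * U)) := by rw [h1]
    _ = Uᴴ * (A * B) * U := by simp only [Matrix.mul_assoc]

lemma unconjU {d : Type*} [Fintype d] [DecidableEq d] (U A : Matrix d d ℂ)
    (hU : Uᴴ * U = 1) : Uᴴ * (U * A * Uᴴ) * U = A := by
  calc Uᴴ * (U * A * Uᴴ) * U = (Uᴴ * U) * (A * (Uᴴ * U)) := by simp only [Matrix.mul_assoc]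
    _ = A := by rw [hU, one_mul, Matrix.mul_one]

lemma ptrace1_conj {n m : ℕ} (Φ : Matrix (Fin n) (Fin n) ℂ) (V : Matrix (Fin m) (Fin m) ℂ)
    (hΦ : Φ * Φᴴ = 1) (M : Matrix (Fin n × Fin m) (Fin n × Fin m) ℂ) :
    ptrace1 ((Φ ⊗ₖ V)ᴴ * M * (Φ ⊗ₖ V)) = Vᴴ * ptrace1 M * V := by
  ext t q
  rw [← trace_kron_std ((Φ ⊗ₖ V)ᴴ * M * (Φ ⊗ₖ V)) q t,
    ← trace_mul_stdm (Vᴴ * ptrace1 M * V) q t,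
    trace_conj_mul (Φ ⊗ₖ V) M _, trace_conj_mul V (ptrace1 M) _]
  have h : (Φ ⊗ₖ V) * ((1 : Matrix (Fin n) (Fin n) ℂ) ⊗ₖ Matrix.single q t (1:ℂ)) * (Φ ⊗ₖ V)ᴴ
      = (1 : Matrix (Fin n) (Fin n) ℂ) ⊗ₖ (V * Matrix.single q t (1:ℂ) * Vᴴ) := by
    rw [kronCT, ← Matrix.mul_kronecker_mul, ← Matrix.mul_kronecker_mul, Matrix.mul_one, hΦ]
  rw [h, trace_mul_one_kron]

lemma psd_smul {d : ℕ} (M : Matrix (Fin d) (Fin d) ℂ) (hM : M.PosSemidef) (c : ℝ)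
    (hc : 0 ≤ c) : (((c : ℝ) : ℂ) • M).PosSemidef := by
  constructor
  · rw [Matrix.IsHermitian, Matrix.conjTranspose_smul, Complex.star_def, Complex.conj_ofReal,
      hM.1.eq]
  · intro x
    have e : (x.sum fun i xi => x.sum fun j xj => star xi * (((c:ℝ):ℂ) • M) i j * xj)
        = ((c:ℝ):ℂ) * x.sum fun i xi => x.sum fun j xj => star xi * M i j * xj := by
      simp only [Finsupp.mul_sum, Matrix.smul_apply, smul_eq_mul]
      exact Finsupp.sum_congr fun i _ => Finsupp.sum_congr fun j _ => by ring
    rw [e]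
    exact mul_nonneg (by exact_mod_cast hc) (hM.2 x)

noncomputable def Ssum {n m : ℕ} (s : Matrix (Fin n × Fin m) (Fin n × Fin m) ℂ)
    (p r : Fin n) (j i : Fin m) : ℂ :=
  ∑ k : Fin n, ∑ q : Fin m, s (k, j) (p, q) * s (r, q) (k, i)

lemma core {n m : ℕ} (ρ s : Matrix (Fin n × Fin m) (Fin n × Fin m) ℂ)
    (w : Matrix (Fin m) (Fin m) ℂ) (a : Fin m → ℝ)
    (hapos : ∀ j, 0 < a j) (hinj : Function.Injective a)
    (hsH : sᴴ = s) (hss : s * s = ρ)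
    (hwH : wᴴ = w)
    (hpt : ptrace1 ρ = Matrix.diagonal (fun j => (a j : ℂ)))
    (hww : w * w * Matrix.diagonal (fun j => (a j : ℂ)) = 1)
    (hfact : ∀ F G, (ρ * Emap s w (F ⊗ₖ (1 : Matrix (Fin m) (Fin m) ℂ)) *
        ((1 : Matrix (Fin n) (Fin n) ℂ) ⊗ₖ G)).trace = (ρ * (F ⊗ₖ G)).trace) :
    ∀ (l k : Fin n) (j i : Fin m), j ≠ i → ρ (l, j) (k, i) = 0 := by
  have ha0 : ∀ j, ((a j : ℂ)) ≠ 0 := fun j => by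
    exact_mod_cast (hapos j).ne'
  have hane : ∀ {j i : Fin m}, j ≠ i → (a j : ℂ) ≠ (a i : ℂ) := by
    intro j i hji h
    exact hji (hinj (by exact_mod_cast h))
  -- entries of w*w
  have hv : ∀ j i, (w * w) j i = if j = i then ((a i : ℂ))⁻¹ else 0 := by
    intro j i
    have h1 := congrFun (congrFun hww j) i
    rw [Matrix.mul_diagonal] at h1
    by_cases h : j = i
    · subst h; rw [Matrix.one_apply_eq] at h1
      simp only [if_pos rfl]
      rw [inv_eq_one_div]
      exact (eq_div_iff (ha0 j)).mpr h1
    · rw [Matrix.one_apply_ne h] at h1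
      simp only [if_neg h]
      rcases mul_eq_zero.mp h1 with h2 | h2
      · exact h2
      · exact absurd h2 (ha0 i)
  -- w is diagonal
  have hwd : ∀ j i, j ≠ i → w j i = 0 := by
    intro j i hji
    have h1 : (w * (w * w)) j i = ((w * w) * w) j i := by rw [Matrix.mul_assoc]
    have hL : (w * (w * w)) j i = w j i * (a i : ℂ)⁻¹ := by
      rw [Matrix.mul_apply]
      simp [hv, mul_ite]
    have hR : ((w * w) * w) j i = (a j : ℂ)⁻¹ * w j i := by
      rw [Matrix.mul_apply]
      simp [hv, ite_mul]
    rw [hL, hR] at h1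
    have hne : (a i : ℂ)⁻¹ - (a j : ℂ)⁻¹ ≠ 0 := by
      rw [sub_ne_zero]
      exact fun h => hane hji ((inv_inj.mp h).symm ▸ rfl)
    have h2 : w j i * ((a i : ℂ)⁻¹ - (a j : ℂ)⁻¹) = 0 := by linear_combination h1
    rcases mul_eq_zero.mp h2 with h3 | h3
    · exact h3
    · exact absurd h3 hne
  set b : Fin m → ℂ := fun j => w j j with hb
  have hwdg : w = Matrix.diagonal b := by
    ext j i
    by_cases h : j = i
    · subst h; simp [Matrix.diagonal_apply, hb]
    · simp [Matrix.diagonal_apply, h, hwd j i h]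
  have hb2 : ∀ j, b j * b j = (a j : ℂ)⁻¹ := by
    intro j
    have := hv j j
    rw [if_pos rfl, Matrix.mul_apply] at this
    rw [← this]
    show w j j * w j j = _
    exact (Finset.sum_eq_single (f := fun k => w j k * w k j) j
      (fun k _ hk => by show w j k * w k j = 0; rw [hwd j k (fun h => hk h.symm), zero_mul])
      (fun h => absurd (Finset.mem_univ j) h)).symm
  have hbreal : ∀ j, star (b j) = b j := by
    intro j
    show star (w j j) = w j j
    conv_rhs => rw [← hwH]
    rw [Matrix.conjTranspose_apply]
  have hb0 : ∀ j, b j ≠ 0 := by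
    intro j h
    have := hb2 j
    rw [h, mul_zero] at this
    exact (inv_ne_zero (ha0 j)) this.symm
  -- gammaOp conjTranspose
  have hγct : (gammaOp s w)ᴴ = ((1 : Matrix (Fin n) (Fin n) ℂ) ⊗ₖ w) * s := by
    rw [gammaOp, conjTranspose_mul, kronCT, conjTranspose_one, hwH, hsH]
  -- Emap closed form on stdBasis ⊗ 1
  have hE : ∀ p r : Fin n, Emap s w (Matrix.single p r (1:ℂ) ⊗ₖ (1 : Matrix (Fin m) (Fin m) ℂ))
      = (1 : Matrix (Fin n) (Fin n) ℂ) ⊗ₖ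
        (Matrix.of fun β α => b β * b α * Ssum s p r β α) := by
    intro p r
    rw [Emap, hγct, gammaOp]
    congr 1
    ext β α
    rw [hwdg]
    simp only [ptrace1, Ssum, Matrix.mul_apply, Fintype.sum_prod_type, kroneckerMap_apply,
      Matrix.one_apply, Matrix.diagonal_apply, Matrix.single, Matrix.of_apply, ite_and,
      ite_mul, mul_ite, mul_one, mul_zero, zero_mul, one_mul, sum_ite_const,
      Finset.sum_ite_eq, Finset.sum_ite_eq', Finset.mem_univ, if_true,
      Finset.mul_sum, Finset.sum_mul]
    by_cases hc : β.1 = α.1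
    · skip
      refine Finset.sum_congr rfl fun k _ => ?_
      refine Finset.sum_congr rfl fun q _ => ?_
      ring
    · exact Finset.sum_congr rfl fun k _ => Finset.sum_congr rfl fun q _ => by ring
  -- the key factorization identity
  have hkey : ∀ (p r : Fin n) (j i : Fin m),
      ρ (r, j) (p, i) = (a j : ℂ) * (b j * b i * Ssum s p r j i) := by
    intro p r j i
    have h := hfact (Matrix.single p r (1:ℂ)) (Matrix.single i j (1:ℂ))
    rw [hE p r, trace_std_std] at h
    rw [trace_kron_std, ptrace1_mul_kron, hpt, Matrix.diagonal_mul] at h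
    simp only [Matrix.of_apply] at h
    exact h.symm
  -- conclusion
  intro l k j i hji
  have hρH : ρᴴ = ρ := by rw [← hss, conjTranspose_mul, hsH]
  have hsapp : ∀ x y, star (s x y) = s y x := fun x y => by
    conv_rhs => rw [← hsH]
    rw [Matrix.conjTranspose_apply]
  have e1 := hkey k l j i
  have e2 := hkey l k i j
  have hstar : star (ρ (k, i) (l, j)) = ρ (l, j) (k, i) := by
    conv_rhs => rw [← hρH]
    rw [Matrix.conjTranspose_apply]
  have hSstar : star (Ssum s l k i j) = Ssum s k l j i := by
    rw [Ssum, Ssum, star_sum]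
    refine Finset.sum_congr rfl fun k' _ => ?_
    rw [star_sum]
    refine Finset.sum_congr rfl fun q _ => ?_
    rw [star_mul', hsapp, hsapp]
    ring
  have e3 : ρ (l, j) (k, i) = (a i : ℂ) * (b j * b i * Ssum s k l j i) := by
    rw [← hstar, e2]
    simp only [star_mul', hSstar, hbreal, Complex.star_def, Complex.conj_ofReal]
    ring
  have hcS : b j * b i * Ssum s k l j i = 0 := by
    have hd : ((a j : ℂ) - (a i : ℂ)) * (b j * b i * Ssum s k l j i) = 0 := by
      linear_combination e3 - e1
    rcases mul_eq_zero.mp hd with h3 | h3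
    · exact absurd (sub_eq_zero.mp h3) (hane hji)
    · exact h3
  rw [e1, hcS, mul_zero]

/-- nondegeneracy criterion. If `Tr₁ρ` has nondegenerate eigenvalues and
the correlation function factorizes, then `ρ_{lkji} = 0` for `j ≠ i`, and `ρ` admits a
separable decomposition `ρ = Σ_j μ_j σ_jᴵ ⊗ |ϕ_j⟩⟨ϕ_j|` with abelian second factors. -/
theorem nondegeneracy_criterion {n m N : ℕ}
    (ρ s : Matrix (Fin n × Fin m) (Fin n × Fin m) ℂ) (w : Matrix (Fin m) (Fin m) ℂ)
    (lam : Fin N → ℝ) (hlpos : ∀ i, 0 < lam i) (hlsum : ∑ i, lam i = 1)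
    (ρI : Fin N → Matrix (Fin n) (Fin n) ℂ)
    (hρI : ∀ i, (ρI i).PosSemidef ∧ (ρI i).trace = 1)
    (ρII : Fin N → Matrix (Fin m) (Fin m) ℂ)
    (hρII : ∀ i, (ρII i).PosSemidef ∧ (ρII i).trace = 1)
    (hdec : ρ = ∑ i, ((lam i : ℝ) : ℂ) • (ρI i ⊗ₖ ρII i))
    (hρ : ρ.PosDef) (htr : ρ.trace = 1)
    (hs : s.PosSemidef) (hss : s * s = ρ)
    (hw : w.PosSemidef) (hww : w * w * ptrace1 ρ = 1)
    (φ : Fin n → Fin n → ℂ)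
    (hφ : ∀ i j, (∑ k, star (φ i k) * φ j k) = if i = j then 1 else 0)
    (ϕ : Fin m → Fin m → ℂ)
    (hϕ : ∀ i j, (∑ k, star (ϕ i k) * ϕ j k) = if i = j then 1 else 0)
    (am : Fin m → ℝ) (hapos : ∀ j, 0 < am j)
    (heig : ∀ j, (ptrace1 ρ).mulVec (ϕ j) = ((am j : ℝ) : ℂ) • ϕ j)
    (hnondeg : Function.Injective am)
    (hfact : ∀ (F : Matrix (Fin n) (Fin n) ℂ) (G : Matrix (Fin m) (Fin m) ℂ),
      (ρ * Emap s w (F ⊗ₖ (1 : Matrix (Fin m) (Fin m) ℂ)) *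
          ((1 : Matrix (Fin n) (Fin n) ℂ) ⊗ₖ G)).trace =
        ∑ i, ((lam i : ℝ) : ℂ) * (ρI i * F).trace * (ρII i * G).trace) :
    (∀ (l k : Fin n) (j i : Fin m), j ≠ i → mel φ ϕ ρ l k j i = 0) ∧
      ∃ (μ : Fin m → ℝ) (σI : Fin m → Matrix (Fin n) (Fin n) ℂ),
        (∀ j, 0 ≤ μ j) ∧ (∑ j, μ j = 1) ∧
        (∀ j, (σI j).PosSemidef ∧ (σI j).trace = 1) ∧
        ρ = ∑ j, ((μ j : ℝ) : ℂ) • (σI j ⊗ₖ ketbra (ϕ j) (ϕ j)) := by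
  classical
  set Φ : Matrix (Fin n) (Fin n) ℂ := Matrix.of fun x l => φ l x with hΦdef
  set V : Matrix (Fin m) (Fin m) ℂ := Matrix.of fun x j => ϕ j x with hVdef
  have hΦu : Φᴴ * Φ = 1 := by
    ext i j
    rw [Matrix.mul_apply]
    simpa [Matrix.conjTranspose_apply, Matrix.one_apply, hΦdef] using hφ i j
  have hVu : Vᴴ * V = 1 := by
    ext i j
    rw [Matrix.mul_apply]
    simpa [Matrix.conjTranspose_apply, Matrix.one_apply, hVdef] using hϕ i j
  have hΦu' : Φ * Φᴴ = 1 := mul_eq_one_comm.mp hΦu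
  have hVu' : V * Vᴴ = 1 := mul_eq_one_comm.mp hVu
  set U : Matrix (Fin n × Fin m) (Fin n × Fin m) ℂ := Φ ⊗ₖ V with hUdef
  have hUct : Uᴴ = Φᴴ ⊗ₖ Vᴴ := kronCT Φ V
  have hUu : Uᴴ * U = 1 := by
    rw [hUct, hUdef, ← Matrix.mul_kronecker_mul, hΦu, hVu, Matrix.one_kronecker_one]
  have hUu' : U * Uᴴ = 1 := mul_eq_one_comm.mp hUu
  set ρ' : Matrix (Fin n × Fin m) (Fin n × Fin m) ℂ := Uᴴ * ρ * U with hρ'def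
  set s' : Matrix (Fin n × Fin m) (Fin n × Fin m) ℂ := Uᴴ * s * U with hs'def
  set w' : Matrix (Fin m) (Fin m) ℂ := Vᴴ * w * V with hw'def
  have htrc : ∀ M : Matrix (Fin n × Fin m) (Fin n × Fin m) ℂ,
      (Uᴴ * M * U).trace = M.trace := by
    intro M
    rw [Matrix.trace_mul_comm, ← Matrix.mul_assoc, hUu', one_mul]
  have hsH : sᴴ = s := hs.1
  have hwH : wᴴ = w := hw.1
  have hs'H : s'ᴴ = s' := by
    rw [hs'def]
    simp [Matrix.conjTranspose_mul, Matrix.conjTranspose_conjTranspose, hsH, Matrix.mul_assoc]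
  have hw'H : w'ᴴ = w' := by
    rw [hw'def]
    simp [Matrix.conjTranspose_mul, Matrix.conjTranspose_conjTranspose, hwH, Matrix.mul_assoc]
  have hss' : s' * s' = ρ' := by
    rw [hs'def, hρ'def, conjMulU _ _ _ hUu', hss]
  have hptV : Vᴴ * ptrace1 ρ * V = Matrix.diagonal (fun j => ((am j : ℝ) : ℂ)) := by
    ext j i
    rw [Matrix.mul_assoc, Matrix.mul_apply]
    have hcol : ∀ y, (ptrace1 ρ * V) y i = ((am i : ℝ) : ℂ) * ϕ i y := by
      intro y
      have h := congrFun (heig i) y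
      simp only [Matrix.mulVec, dotProduct, Pi.smul_apply, smul_eq_mul] at h
      rw [Matrix.mul_apply]
      simpa [hVdef] using h
    simp only [hcol]
    simp only [hcol, Matrix.conjTranspose_apply, hVdef, Matrix.of_apply]
    have h2 : ∑ y, star (ϕ j y) * (((am i : ℝ) : ℂ) * ϕ i y)
        = ((am i : ℝ) : ℂ) * ∑ y, star (ϕ j y) * ϕ i y := by
      rw [Finset.mul_sum]
      exact Finset.sum_congr rfl fun y _ => by ring
    rw [h2, hϕ j i]
    by_cases hji : j = i
    · subst hji; simp [Matrix.diagonal_apply]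
    · simp [Matrix.diagonal_apply, hji]
  have hpt' : ptrace1 ρ' = Matrix.diagonal (fun j => ((am j : ℝ) : ℂ)) := by
    rw [hρ'def, hUdef, ptrace1_conj Φ V hΦu' ρ, hptV]
  have hww' : w' * w' * Matrix.diagonal (fun j => ((am j : ℝ) : ℂ)) = 1 := by
    rw [hw'def, conjMulU V w w hVu', ← hptV, conjMulU V (w * w) (ptrace1 ρ) hVu', hww]
    rw [Matrix.mul_one, hVu]
  have hkron1 : ∀ T : Matrix (Fin m) (Fin m) ℂ,
      Uᴴ * ((1 : Matrix (Fin n) (Fin n) ℂ) ⊗ₖ T) * U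
        = (1 : Matrix (Fin n) (Fin n) ℂ) ⊗ₖ (Vᴴ * T * V) := by
    intro T
    rw [hUct, hUdef, ← Matrix.mul_kronecker_mul, ← Matrix.mul_kronecker_mul, Matrix.mul_one, hΦu]
  have hkronU : ∀ (F : Matrix (Fin n) (Fin n) ℂ) (G : Matrix (Fin m) (Fin m) ℂ),
      U * (F ⊗ₖ G) * Uᴴ = (Φ * F * Φᴴ) ⊗ₖ (V * G * Vᴴ) := by
    intro F G
    rw [hUct, hUdef, ← Matrix.mul_kronecker_mul, ← Matrix.mul_kronecker_mul]
  have hEmap : ∀ A : Matrix (Fin n × Fin m) (Fin n × Fin m) ℂ,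
      Emap s' w' A = Uᴴ * Emap s w (U * A * Uᴴ) * U := by
    intro A
    have hγ : gammaOp s' w' = Uᴴ * gammaOp s w * U := by
      rw [gammaOp, gammaOp, hs'def, hw'def, ← hkron1 w, conjMulU U s _ hUu']
    have hγct : (Uᴴ * gammaOp s w * U)ᴴ = Uᴴ * (gammaOp s w)ᴴ * U := by
      simp [Matrix.conjTranspose_mul, Matrix.conjTranspose_conjTranspose, Matrix.mul_assoc]
    rw [Emap, Emap, hγ, hγct]
    have hA : A = Uᴴ * (U * A * Uᴴ) * U := (unconjU U A hUu).symm
    conv_lhs => rw [hA]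
    rw [conjMulU U _ _ hUu', conjMulU U _ _ hUu']
    rw [hUdef, ptrace1_conj Φ V hΦu', ← hkron1]
  have hfact0 : ∀ (F : Matrix (Fin n) (Fin n) ℂ) (G : Matrix (Fin m) (Fin m) ℂ),
      (ρ * Emap s w (F ⊗ₖ (1 : Matrix (Fin m) (Fin m) ℂ)) *
        ((1 : Matrix (Fin n) (Fin n) ℂ) ⊗ₖ G)).trace = (ρ * (F ⊗ₖ G)).trace := by
    intro F G
    rw [hfact F G]
    conv_rhs => rw [hdec]
    rw [Finset.sum_mul, Matrix.trace_sum]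
    refine Finset.sum_congr rfl fun i _ => ?_
    rw [smul_mul_assoc, Matrix.trace_smul, ← Matrix.mul_kronecker_mul, Matrix.trace_kronecker,
      smul_eq_mul, mul_assoc]
  have hfact' : ∀ (F : Matrix (Fin n) (Fin n) ℂ) (G : Matrix (Fin m) (Fin m) ℂ),
      (ρ' * Emap s' w' (F ⊗ₖ (1 : Matrix (Fin m) (Fin m) ℂ)) *
        ((1 : Matrix (Fin n) (Fin n) ℂ) ⊗ₖ G)).trace = (ρ' * (F ⊗ₖ G)).trace := by
    intro F G
    rw [hEmap]
    have h1 : U * (F ⊗ₖ (1 : Matrix (Fin m) (Fin m) ℂ)) * Uᴴ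
        = (Φ * F * Φᴴ) ⊗ₖ (1 : Matrix (Fin m) (Fin m) ℂ) := by
      rw [hkronU, Matrix.mul_one, hVu']
    have h2 : (1 : Matrix (Fin n) (Fin n) ℂ) ⊗ₖ G
        = Uᴴ * ((1 : Matrix (Fin n) (Fin n) ℂ) ⊗ₖ (V * G * Vᴴ)) * U := by
      rw [hkron1, unconjU V G hVu]
    rw [h1, h2, hρ'def, conjMulU U _ _ hUu', conjMulU U _ _ hUu', htrc, hfact0]
    rw [← hkronU]
    rw [← htrc (ρ * (U * (F ⊗ₖ G) * Uᴴ))]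
    congr 1
    calc Uᴴ * (ρ * (U * (F ⊗ₖ G) * Uᴴ)) * U
        = (Uᴴ * ρ * U) * ((F ⊗ₖ G) * (Uᴴ * U)) := by simp only [Matrix.mul_assoc]
      _ = Uᴴ * ρ * U * (F ⊗ₖ G) := by rw [hUu, Matrix.mul_one]
  have hcore := core ρ' s' w' am hapos hnondeg hs'H hss' hw'H hpt' hww' hfact'
  have hmel : ∀ (l k : Fin n) (j i : Fin m), mel φ ϕ ρ l k j i = ρ' (l, j) (k, i) := by
    intro l k j i
    have hexp : ρ' (l, j) (k, i) = ∑ x' : Fin n × Fin m, ∑ v' : Fin n × Fin m,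
        star (U x' (l, j)) * ρ x' v' * U v' (k, i) := by
      rw [hρ'def, Matrix.mul_apply]
      simp only [Matrix.mul_apply, Matrix.conjTranspose_apply, Finset.sum_mul]
      rw [Finset.sum_comm]
    rw [hexp]
    simp only [mel, dotProduct, Matrix.mulVec, vecTens, Pi.star_apply, star_mul',
      Finset.mul_sum, hUdef, kroneckerMap_apply, hΦdef, hVdef, Matrix.of_apply]
    refine Finset.sum_congr rfl fun x' _ => Finset.sum_congr rfl fun v' _ => by ring
  have part1 : ∀ (l k : Fin n) (j i : Fin m), j ≠ i → mel φ ϕ ρ l k j i = 0 := by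
    intro l k j i hji
    rw [hmel]
    exact hcore l k j i hji
  refine ⟨part1, ?_⟩
  set Bm : Fin m → Matrix (Fin n) (Fin n) ℂ :=
    fun j => Matrix.of fun l k => ρ' (l, j) (k, j) with hBmdef
  set X : Fin m → Matrix (Fin n × Fin m) (Fin n) ℂ :=
    fun j => Matrix.of fun p k => if p = (k, j) then 1 else 0 with hXdef
  have hXB : ∀ j, (X j)ᴴ * ρ' * X j = Bm j := by
    intro j
    ext l k
    simp only [Matrix.mul_apply, Matrix.conjTranspose_apply, Matrix.of_apply, hXdef, hBmdef,
      ite_mul, mul_ite, one_mul, mul_one, zero_mul, mul_zero,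
      Finset.sum_ite_eq, Finset.sum_ite_eq', Finset.mem_univ, if_true, sum_ite_const]
    simp [apply_ite (star : ℂ → ℂ), ite_mul, Finset.sum_ite_eq']
  have hρ'psd : ρ'.PosSemidef := by
    rw [hρ'def]; exact hρ.posSemidef.conjTranspose_mul_mul_same U
  have hBpsd : ∀ j, (Bm j).PosSemidef := fun j => by
    rw [← hXB j]; exact hρ'psd.conjTranspose_mul_mul_same (X j)
  have hBtr : ∀ j, (Bm j).trace = ((am j : ℝ) : ℂ) := by
    intro j
    have h1 : (Bm j).trace = ptrace1 ρ' j j := by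
      simp [Matrix.trace, Matrix.diag, hBmdef, ptrace1]
    rw [h1, hpt', Matrix.diagonal_apply_eq]
  have hsum : ∑ j, am j = 1 := by
    have h1 : (ptrace1 ρ').trace = ρ'.trace := trace_ptrace1 ρ'
    rw [hpt', hρ'def, htrc, htr, Matrix.trace_diagonal] at h1
    exact_mod_cast h1
  set σI : Fin m → Matrix (Fin n) (Fin n) ℂ :=
    fun j => ((((am j)⁻¹ : ℝ)) : ℂ) • (Φ * Bm j * Φᴴ) with hσdef
  have hσpsd : ∀ j, (σI j).PosSemidef := fun j =>
    psd_smul _ ((hBpsd j).mul_mul_conjTranspose_same Φ) _ (inv_nonneg.mpr (hapos j).le)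
  have hσtr : ∀ j, (σI j).trace = 1 := by
    intro j
    rw [hσdef]
    simp only [Matrix.trace_smul]
    rw [Matrix.trace_mul_comm, ← Matrix.mul_assoc, hΦu, one_mul, hBtr, smul_eq_mul]
    rw [← Complex.ofReal_mul, inv_mul_cancel₀ (hapos j).ne', Complex.ofReal_one]
  have hρ'dec : ρ' = ∑ j, (Bm j) ⊗ₖ Matrix.single j j (1:ℂ) := by
    ext ⟨l, q⟩ ⟨k, t⟩
    rw [Matrix.sum_apply]
    simp only [kroneckerMap_apply, Matrix.single, Matrix.of_apply, ite_and, mul_ite,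
      mul_one, mul_zero, Finset.sum_ite_eq, Finset.sum_ite_eq', Finset.mem_univ, if_true,
      hBmdef]
    by_cases hqt : q = t
    · subst hqt; simp
    · simp [hqt, hcore l k q t hqt]
  have hVE : ∀ j, V * Matrix.single j j (1:ℂ) * Vᴴ = ketbra (ϕ j) (ϕ j) := by
    intro j
    ext x y
    simp only [Matrix.mul_apply, Matrix.conjTranspose_apply, Matrix.single,
      Matrix.of_apply, ite_and, ite_mul, mul_ite, zero_mul, mul_zero, one_mul, mul_one,
      Finset.sum_ite_eq, Finset.sum_ite_eq', Finset.mem_univ, if_true, sum_ite_const,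
      ketbra, hVdef]
  have hρU : ρ = U * ρ' * Uᴴ := by
    have h := unconjU Uᴴ ρ (by rw [Matrix.conjTranspose_conjTranspose]; exact hUu')
    rw [Matrix.conjTranspose_conjTranspose] at h
    rw [hρ'def]
    exact h.symm
  refine ⟨am, σI, fun j => (hapos j).le, hsum, fun j => ⟨hσpsd j, hσtr j⟩, ?_⟩
  rw [hρU, hρ'dec, Finset.mul_sum, Finset.sum_mul]
  refine Finset.sum_congr rfl fun j _ => ?_
  rw [hkronU (Bm j) (Matrix.single j j (1:ℂ)), hVE j, hσdef]
  rw [Matrix.smul_kronecker, smul_smul]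
  rw [show ((am j : ℝ) : ℂ) * ((((am j)⁻¹ : ℝ)) : ℂ) = 1 by
    rw [← Complex.ofReal_mul, mul_inv_cancel₀ (hapos j).ne', Complex.ofReal_one]]
  rw [one_smul]
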